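/- Let r, s : I → ℝ be differentiable functions on an interval I with r > 0 everywhere, satisfying the ODE system r' = r·s and s' = 2r⁶ + s² − 1. Then the function (r⁶ − s² + 1)/r² is constant on I. -/

import Mathlib

/-- If `r, s : I → ℝ` are differentiable on an interval `I` with `r > 0`, satisfying
`r' = r·s` and `s' = 2r⁶ + s² - 1`, then `(r⁶ - s² + 1)/r²` is constant on `I`. -/
theorem first_integral_constant (I : Set ℝ) (hI : Convex ℝ I) (r s : ℝ → ℝ)
    (hr : ∀ x ∈ I, 0 < r x)
    (hr' : ∀ x ∈ I, HasDerivWithinAt r (r x * s x) I x)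
    (hs' : ∀ x ∈ I, HasDerivWithinAt s (2 * r x ^ 6 + s x ^ 2 - 1) I x) :
    ∀ x ∈ I, ∀ y ∈ I,
      (r x ^ 6 - s x ^ 2 + 1) / r x ^ 2 = (r y ^ 6 - s y ^ 2 + 1) / r y ^ 2 := by
  set F : ℝ → ℝ := fun x => (r x ^ 6 - s x ^ 2 + 1) / r x ^ 2 with hF
  have hderiv : ∀ x ∈ I, HasDerivWithinAt F 0 I x := by
    intro x hx
    have hrx := (hr x hx).ne'
    have hnum : HasDerivWithinAt (fun x => r x ^ 6 - s x ^ 2 + 1)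
        (6 * r x ^ 5 * (r x * s x) - 2 * s x ^ 1 * (2 * r x ^ 6 + s x ^ 2 - 1)) I x := by
      have h1 := ((hr' x hx).pow 6).sub ((hs' x hx).pow 2)
      simpa using h1.add_const 1
    have hden : HasDerivWithinAt (fun x => r x ^ 2) (2 * r x ^ 1 * (r x * s x)) I x :=
      (hr' x hx).pow 2
    have h := hnum.div hden (by positivity)
    convert h using 1
    · rfl
    · rfl
    · rfl
    rw [eq_div_iff (by positivity)]
    ring
  intro x hx y hy
  have := hI.norm_image_sub_le_of_norm_hasDerivWithin_le
    (f' := fun _ => (0 : ℝ)) hderiv (C := 0) (fun x _ => by simp) hy hx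
  simp only [zero_mul, norm_le_zero_iff, sub_eq_zero] at this
  exact this
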